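/- Fix N ≥ 2, weights w₁,…,w_N > 0 with Σᵢ wᵢ = 1, and 0 < χ < 1. Let V : ℝ → ℝ be continuous and coercive (V(x) → +∞ as |x| → ∞), and assume the function x ↦ inf_{y∈ℝ} (w₁ V(y) + w_N V(x + y)) − log|x| is coercive on ℝ. Then for every E₀ ∈ ℝ there exists δ > 0 such that every strictly increasing configuration x₁ < ⋯ < x_N with discrete Keller–Segel energy Ẽ_N(x) ≤ E₀ satisfies min_{2 ≤ i ≤ N} (xᵢ − xᵢ₋₁) ≥ δ. -/

import Mathlib

open Real Finset Filter

/-- `rᵢ = min(Δxᵢ, Δxᵢ₊₁)` with the convention `Δx₁ = Δx_{N+1} = +∞`, for `N = n + 2`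
particles indexed from `0` to `n+1`. -/
noncomputable def rball (n : ℕ) (x : Fin (n + 2) → ℝ) (i : Fin (n + 2)) : ℝ :=
  if i.val = 0 then x 1 - x 0
  else if i.val = n + 1 then x i - x (i - 1)
  else min (x i - x (i - 1)) (x (i + 1) - x i)

/-- The one-dimensional discrete modified Keller–Segel energy with confinement `V` and
chemosensitivity `χ`:
`Ẽ_N(x) = Σᵢ wᵢ log(wᵢ/rᵢ) + Σᵢ wᵢ V(xᵢ) + χ Σᵢ Σ_{j≠i} wᵢwⱼ log|xᵢ − xⱼ|`. -/
noncomputable def kellerSegelEnergy (n : ℕ) (w : Fin (n + 2) → ℝ) (V : ℝ → ℝ) (χ : ℝ)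
    (x : Fin (n + 2) → ℝ) : ℝ :=
  ∑ i, w i * Real.log (w i / rball n x i) + ∑ i, w i * V (x i) +
    χ * ∑ i, ∑ j ∈ Finset.univ.erase i, w i * w j * Real.log |x i - x j|

private lemma ks_sub_one_lt {n : ℕ} {i : Fin (n + 2)} (hi : i.val ≠ 0) : i - 1 < i := by
  have h0 : i ≠ 0 := by rintro rfl; simp at hi
  rw [Fin.lt_def, Fin.coe_sub_one, if_neg h0]
  omega

private lemma ks_coe_sub_one {n : ℕ} {i : Fin (n + 2)} (hi : i.val ≠ 0) :
    ((i - 1 : Fin (n + 2))).val = i.val - 1 := by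
  rw [Fin.coe_sub_one, if_neg (by rintro rfl; simp at hi)]

private lemma ks_coe_add_one {n : ℕ} {i : Fin (n + 2)} (hi : i.val ≠ n + 1) :
    ((i + 1 : Fin (n + 2))).val = i.val + 1 :=
  Fin.val_add_one_of_lt (by rw [Fin.lt_def, Fin.val_last]; have := i.isLt; omega)

private lemma ks_lt_add_one {n : ℕ} {i : Fin (n + 2)} (hi : i.val ≠ n + 1) : i < i + 1 := by
  rw [Fin.lt_def, ks_coe_add_one hi]
  omega

private lemma rball_pos {n : ℕ} {x : Fin (n + 2) → ℝ} (hx : StrictMono x) (i : Fin (n + 2)) :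
    0 < rball n x i := by
  rw [rball]
  split_ifs with h0 h1
  · exact sub_pos.mpr (hx (by rw [Fin.lt_def, Fin.val_zero, Fin.val_one]; omega))
  · exact sub_pos.mpr (hx (ks_sub_one_lt h0))
  · exact lt_min (sub_pos.mpr (hx (ks_sub_one_lt h0))) (sub_pos.mpr (hx (ks_lt_add_one h1)))

private lemma rball_le_gap {n : ℕ} {x : Fin (n + 2) → ℝ} {i : Fin (n + 2)}
    (hi : i.val ≠ 0) : rball n x i ≤ x i - x (i - 1) := by
  rw [rball, if_neg hi]
  split_ifs with h
  · exact le_refl _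
  · exact min_le_left _ _

private lemma rball_le_dist {n : ℕ} {x : Fin (n + 2) → ℝ} (hx : StrictMono x)
    {i j : Fin (n + 2)} (hij : i ≠ j) : rball n x i ≤ |x i - x j| := by
  rcases lt_or_gt_of_ne hij with h | h
  · have hlt := Fin.lt_def.mp h
    have hjlt := j.isLt
    have habs : |x i - x j| = x j - x i := by
      rw [abs_sub_comm, abs_of_pos (sub_pos.mpr (hx h))]
    have hin1 : i.val ≠ n + 1 := by omega
    rw [habs, rball]
    by_cases h0 : i.val = 0
    · rw [if_pos h0]
      have hi0 : i = 0 := Fin.ext (by rw [h0]; simp)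
      have h1j : x 1 ≤ x j := hx.monotone (by rw [Fin.le_def, Fin.val_one]; omega)
      have h0i : x 0 = x i := by rw [hi0]
      linarith
    · rw [if_neg h0, if_neg hin1]
      have hij1 : x (i + 1) ≤ x j := hx.monotone (by rw [Fin.le_def, ks_coe_add_one hin1]; omega)
      have := min_le_right (x i - x (i - 1)) (x (i + 1) - x i)
      linarith
  · have hlt := Fin.lt_def.mp h
    have habs : |x i - x j| = x i - x j := abs_of_pos (sub_pos.mpr (hx h))
    have hi0 : i.val ≠ 0 := by omega
    have hle : x j ≤ x (i - 1) := hx.monotone (by rw [Fin.le_def, ks_coe_sub_one hi0]; omega)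
    have := rball_le_gap (x := x) hi0
    rw [habs]; linarith

private lemma rball_le_diam {n : ℕ} {x : Fin (n + 2) → ℝ} (hx : StrictMono x) (i : Fin (n + 2)) :
    rball n x i ≤ x (Fin.last (n + 1)) - x 0 := by
  have h0L : (0 : Fin (n + 2)) ≠ Fin.last (n + 1) := by simp [Fin.ext_iff]
  rcases eq_or_ne i 0 with rfl | hne
  · have h := rball_le_dist hx h0L
    rwa [abs_sub_comm, abs_of_nonneg (sub_nonneg.mpr (hx.monotone (Fin.zero_le _)))] at h
  · have h := rball_le_dist hx (show i ≠ 0 from hne)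
    rw [abs_of_nonneg (sub_nonneg.mpr (hx.monotone (Fin.zero_le i)))] at h
    have h2 : x i ≤ x (Fin.last (n + 1)) := hx.monotone (Fin.le_last i)
    linarith

/-- for `N ≥ 2`, positive weights summing to one, `0 < χ < 1`, `V`
continuous and coercive with `x ↦ inf_y (w₁V(y) + w_N V(x+y)) − log|x|` coercive, every
energy sublevel set has its minimal inter-particle distance bounded below by a positive
constant. -/
theorem kellerSegel_min_gap_bound (n : ℕ) (w : Fin (n + 2) → ℝ)
    (hw : ∀ i, 0 < w i) (hw1 : ∑ i, w i = 1) (χ : ℝ) (hχ0 : 0 < χ) (hχ1 : χ < 1)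
    (V : ℝ → ℝ) (hVcont : Continuous V)
    (hVcoer : Tendsto V (cocompact ℝ) atTop)
    (hVW : Tendsto
      (fun t : ℝ => (⨅ y : ℝ, (w 0 * V y + w (Fin.last (n + 1)) * V (t + y))) -
        Real.log |t|) (cocompact ℝ) atTop)
    (E₀ : ℝ) :
    ∃ δ > 0, ∀ x : Fin (n + 2) → ℝ, StrictMono x →
      kellerSegelEnergy n w V χ x ≤ E₀ →
      ∀ i : Fin (n + 2), i.val ≠ 0 → δ ≤ x i - x (i - 1) := by
  classical
  set L : Fin (n + 2) := Fin.last (n + 1) with hLdef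
  have hwle : ∀ i, w i ≤ 1 := by
    intro i
    rw [← hw1]
    exact Finset.single_le_sum (fun j _ => (hw j).le) (Finset.mem_univ i)
  set c : Fin (n + 2) → ℝ := fun i => w i * (1 - χ * (1 - w i)) with hcdef
  have hc_pos : ∀ i, 0 < c i := by
    intro i
    have h1 := hw i; have h2 := hwle i
    have h3 : 0 < 1 - χ * (1 - w i) := by nlinarith
    exact mul_pos h1 h3
  have hc_le : ∀ i, c i ≤ w i := by
    intro i
    have h1 := hw i; have h2 := hwle i
    simp only [hcdef]
    nlinarith [mul_nonneg hχ0.le (mul_nonneg h1.le (by linarith : (0:ℝ) ≤ 1 - w i))]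
  obtain ⟨t₀, hBmin⟩ := hVcont.exists_forall_le hVcoer
  set B : ℝ := min 0 (V t₀) with hBdef
  have hB0 : B ≤ 0 := min_le_left _ _
  have hBle : ∀ t, B ≤ V t := fun t => le_trans (min_le_right _ _) (hBmin t)
  set W : ℝ → ℝ := fun t => ⨅ y : ℝ, (w 0 * V y + w L * V (t + y)) with hWdef
  have hWlow : ∀ t, (w 0 + w L) * B ≤ W t := by
    intro t
    refine le_ciInf fun y => ?_
    have h1 := mul_le_mul_of_nonneg_left (hBle y) (hw 0).le
    have h2 := mul_le_mul_of_nonneg_left (hBle (t + y)) (hw L).le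
    rw [add_mul]; exact add_le_add h1 h2
  have hWbdd : ∀ t, BddBelow (Set.range fun y : ℝ => w 0 * V y + w L * V (t + y)) := by
    intro t
    refine ⟨(w 0 + w L) * B, ?_⟩
    rintro _ ⟨y, rfl⟩
    have h1 := mul_le_mul_of_nonneg_left (hBle y) (hw 0).le
    have h2 := mul_le_mul_of_nonneg_left (hBle (t + y)) (hw L).le
    rw [add_mul]; exact add_le_add h1 h2
  have hVW' : Tendsto (fun t : ℝ => W t - Real.log |t|) (cocompact ℝ) atTop := hVW
  obtain ⟨C₂, hC₂0, hC₂⟩ : ∃ C, 0 ≤ C ∧ ∀ t : ℝ, Real.log |t| - C ≤ W t := by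
    have hev := hVW'.eventually (eventually_ge_atTop (0 : ℝ))
    rw [Filter.eventually_iff, mem_cocompact] at hev
    obtain ⟨K, hK, hKs⟩ := hev
    obtain ⟨M, hM⟩ := hK.isBounded.subset_closedBall 0
    refine ⟨max 0 (Real.log (max 1 M) - (w 0 + w L) * B), le_max_left _ _, fun t => ?_⟩
    by_cases ht : t ∈ K
    · have h1 : |t| ≤ M := by
        have := hM ht
        rwa [Metric.mem_closedBall, Real.dist_eq, sub_zero] at this
      have h2 : Real.log |t| ≤ Real.log (max 1 M) := by
        rcases le_or_gt |t| 1 with h | h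
        · exact le_trans (Real.log_nonpos (abs_nonneg t) h) (Real.log_nonneg (le_max_left _ _))
        · exact Real.log_le_log (lt_trans one_pos h) (le_trans h1 (le_max_right _ _))
      have h3 := hWlow t
      have h4 := le_max_right 0 (Real.log (max 1 M) - (w 0 + w L) * B)
      linarith
    · have h5 : (0 : ℝ) ≤ W t - Real.log |t| := hKs ht
      have h4 := le_max_left 0 (Real.log (max 1 M) - (w 0 + w L) * B)
      linarith
  obtain ⟨i₀, -, hi₀⟩ := Finset.exists_min_image Finset.univ c ⟨0, Finset.mem_univ 0⟩
  set K₀ : ℝ := ∑ i, w i * Real.log (w i) with hK₀def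
  set t' : ℝ := min (K₀ + 2 * B - C₂ - E₀) 0 with ht'def
  have ht'0 : t' ≤ 0 := min_le_right _ _
  refine ⟨Real.exp (t' / c i₀), Real.exp_pos _, ?_⟩
  intro x hx hE k hk
  have hr_pos : ∀ i, 0 < rball n x i := rball_pos hx
  have hΔpos : 0 < x k - x (k - 1) := sub_pos.mpr (hx (ks_sub_one_lt hk))
  set D : ℝ := x L - x 0 with hDdef
  have hDpos : 0 < D := sub_pos.mpr (hx (by rw [Fin.lt_def]; simp [hLdef]))
  set Lg : ℝ := Real.log (max 1 D) with hLgdef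
  have hLg0 : 0 ≤ Lg := Real.log_nonneg (le_max_left _ _)
  have hlogr : ∀ i, Real.log (rball n x i) ≤ Lg := fun i =>
    Real.log_le_log (hr_pos i) ((rball_le_diam hx i).trans (le_max_right _ _))
  have h1 : ∑ i, w i * Real.log (w i / rball n x i)
      = K₀ - ∑ i, w i * Real.log (rball n x i) := by
    rw [hK₀def, ← Finset.sum_sub_distrib]
    refine Finset.sum_congr rfl fun i _ => ?_
    rw [Real.log_div (hw i).ne' (hr_pos i).ne']
    ring
  have h2 : ∑ i, (w i * (1 - w i)) * Real.log (rball n x i)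
      ≤ ∑ i, ∑ j ∈ Finset.univ.erase i, w i * w j * Real.log |x i - x j| := by
    refine Finset.sum_le_sum fun i _ => ?_
    have hsum : ∑ j ∈ Finset.univ.erase i, w j = 1 - w i := by
      rw [Finset.sum_erase_eq_sub (Finset.mem_univ i), hw1]
    calc (w i * (1 - w i)) * Real.log (rball n x i)
        = (∑ j ∈ Finset.univ.erase i, w j) * (w i * Real.log (rball n x i)) := by
          rw [hsum]; ring
      _ = ∑ j ∈ Finset.univ.erase i, w j * (w i * Real.log (rball n x i)) :=
          Finset.sum_mul _ _ _
      _ ≤ ∑ j ∈ Finset.univ.erase i, w i * w j * Real.log |x i - x j| := by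
          refine Finset.sum_le_sum fun j hj => ?_
          have hji : j ≠ i := (Finset.mem_erase.mp hj).1
          have hlog := Real.log_le_log (hr_pos i) (rball_le_dist hx hji.symm)
          calc w j * (w i * Real.log (rball n x i))
              = (w i * w j) * Real.log (rball n x i) := by ring
            _ ≤ (w i * w j) * Real.log |x i - x j| :=
                mul_le_mul_of_nonneg_left hlog (mul_nonneg (hw i).le (hw j).le)
            _ = w i * w j * Real.log |x i - x j| := by ring
  have h2' := mul_le_mul_of_nonneg_left h2 hχ0.le
  have hE1 : K₀ + ∑ i, w i * V (x i) - ∑ i, c i * Real.log (rball n x i)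
      ≤ kellerSegelEnergy n w V χ x := by
    have hident : ∑ i, w i * Real.log (rball n x i) - ∑ i, c i * Real.log (rball n x i)
        = χ * ∑ i, (w i * (1 - w i)) * Real.log (rball n x i) := by
      rw [Finset.mul_sum, ← Finset.sum_sub_distrib]
      refine Finset.sum_congr rfl fun i _ => ?_
      simp only [hcdef]
      ring
    rw [kellerSegelEnergy, h1]
    linarith
  have h3 : ∑ i, c i * Real.log (rball n x i)
      ≤ c k * Real.log (x k - x (k - 1)) + Lg := by
    have hsplit : ∑ i, c i * Real.log (rball n x i)
        = c k * Real.log (rball n x k)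
          + ∑ i ∈ Finset.univ.erase k, c i * Real.log (rball n x i) :=
      (Finset.add_sum_erase _ _ (Finset.mem_univ k)).symm
    have hck : c k * Real.log (rball n x k) ≤ c k * Real.log (x k - x (k - 1)) :=
      mul_le_mul_of_nonneg_left (Real.log_le_log (hr_pos k) (rball_le_gap hk)) (hc_pos k).le
    have htail : ∑ i ∈ Finset.univ.erase k, c i * Real.log (rball n x i) ≤ Lg := by
      calc ∑ i ∈ Finset.univ.erase k, c i * Real.log (rball n x i)
          ≤ ∑ i ∈ Finset.univ.erase k, c i * Lg :=
            Finset.sum_le_sum fun i _ => mul_le_mul_of_nonneg_left (hlogr i) (hc_pos i).le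
        _ = (∑ i ∈ Finset.univ.erase k, c i) * Lg := (Finset.sum_mul _ _ _).symm
        _ ≤ 1 * Lg := by
            refine mul_le_mul_of_nonneg_right ?_ hLg0
            calc ∑ i ∈ Finset.univ.erase k, c i
                ≤ ∑ i, c i := Finset.sum_le_sum_of_subset_of_nonneg
                  (Finset.erase_subset _ _) (fun i _ _ => (hc_pos i).le)
              _ ≤ ∑ i, w i := Finset.sum_le_sum fun i _ => hc_le i
              _ = 1 := hw1
        _ = Lg := one_mul _
    linarith
  have h4 : W D + B ≤ ∑ i, w i * V (x i) := by
    have hL0 : L ≠ (0 : Fin (n + 2)) := by simp [hLdef, Fin.ext_iff]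
    have hLm : L ∈ Finset.univ.erase (0 : Fin (n + 2)) :=
      Finset.mem_erase.mpr ⟨hL0, Finset.mem_univ _⟩
    have e1 : ∑ i, w i * V (x i)
        = w 0 * V (x 0) + (w L * V (x L)
          + ∑ i ∈ (Finset.univ.erase 0).erase L, w i * V (x i)) := by
      rw [← Finset.add_sum_erase Finset.univ (fun i => w i * V (x i)) (Finset.mem_univ 0),
        ← Finset.add_sum_erase _ (fun i => w i * V (x i)) hLm]
    have htail : B ≤ ∑ i ∈ (Finset.univ.erase 0).erase L, w i * V (x i) := by
      have t1 : ∑ i ∈ (Finset.univ.erase 0).erase L, w i * B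
          ≤ ∑ i ∈ (Finset.univ.erase 0).erase L, w i * V (x i) :=
        Finset.sum_le_sum fun i _ => mul_le_mul_of_nonneg_left (hBle _) (hw i).le
      have t2 : ∑ i ∈ (Finset.univ.erase 0).erase L, w i ≤ 1 := by
        rw [← hw1]
        exact Finset.sum_le_sum_of_subset_of_nonneg
          ((Finset.erase_subset _ _).trans (Finset.erase_subset _ _))
          (fun i _ _ => (hw i).le)
      have t3 : 1 * B ≤ (∑ i ∈ (Finset.univ.erase 0).erase L, w i) * B :=
        mul_le_mul_of_nonpos_right t2 hB0
      rw [Finset.sum_mul] at t3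
      linarith
    have hWle : W D ≤ w 0 * V (x 0) + w L * V (x L) := by
      have hci := ciInf_le (hWbdd D) (x 0)
      have hDx : D + x 0 = x L := by rw [hDdef]; ring
      rwa [hDx] at hci
    rw [e1]
    linarith
  have h5 : 2 * B - C₂ + Lg ≤ ∑ i, w i * V (x i) := by
    rcases le_or_gt 1 D with h1D | h1D
    · have hLgD : Lg = Real.log D := by rw [hLgdef, max_eq_right h1D]
      have hc2 := hC₂ D
      rw [abs_of_pos hDpos] at hc2
      linarith
    · have hLgD : Lg = 0 := by rw [hLgdef, max_eq_left h1D.le, Real.log_one]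
      have hsum01 : w 0 + w L ≤ 1 := by
        have e2 : w 0 + w L = ∑ i ∈ ({0, L} : Finset (Fin (n + 2))), w i := by
          rw [Finset.sum_pair (by simp [hLdef, Fin.ext_iff] : (0 : Fin (n + 2)) ≠ L)]
        rw [← hw1, e2]
        exact Finset.sum_le_sum_of_subset_of_nonneg (Finset.subset_univ _)
          (fun i _ _ => (hw i).le)
      have t3 : 1 * B ≤ (w 0 + w L) * B := mul_le_mul_of_nonpos_right hsum01 hB0
      have hwl := hWlow D
      linarith
  have h6 : t' ≤ c k * Real.log (x k - x (k - 1)) := by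
    have hEE := le_trans hE1 hE
    calc t' ≤ K₀ + 2 * B - C₂ - E₀ := min_le_left _ _
      _ ≤ c k * Real.log (x k - x (k - 1)) := by linarith
  have h7 : t' / c i₀ ≤ Real.log (x k - x (k - 1)) := by
    have hcm := hi₀ k (Finset.mem_univ k)
    have h8 : t' / c k ≤ Real.log (x k - x (k - 1)) :=
      (div_le_iff₀ (hc_pos k)).mpr (by linarith)
    have h9 : t' / c i₀ ≤ t' / c k := by
      rw [div_le_div_iff₀ (hc_pos i₀) (hc_pos k)]
      exact mul_le_mul_of_nonpos_left hcm ht'0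
    linarith
  calc Real.exp (t' / c i₀)
      ≤ Real.exp (Real.log (x k - x (k - 1))) := Real.exp_le_exp.mpr h7
    _ = x k - x (k - 1) := Real.exp_log hΔpos
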